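/- Let a : Fin n → ℝ^d be a point configuration whose points affinely span ℝ^d and let 1 ≤ k ≤ d. Then for all weight vectors w, w' : Fin n → ℝ, the following are equivalent: (i) w and w' induce the same coherent hypersimplicial subdivision at level k+1 of a; (ii) w and w' induce the same coherent hypersimplicial subdivision at level k of a, and for every x ∈ Fin n they induce the same coherent hypersimplicial subdivision at level k of the restricted configuration a|_{Fin n \ {x}}. (This says that F^{(k+1)}(A) is normally equivalent to F^{(k)}(A) + Σ_{x} F^{(k)}(A_{[n]\x}).) -/

import Mathlib

/-- The tile `[X,Y]` (with `X ⊆ Y ⊆ J`) is a `w`-tile of the restricted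
configuration `a|_J`. -/
def IsWTileOn {n d : ℕ} (a : Fin n → (Fin d → ℝ)) (w : Fin n → ℝ)
    (J X Y : Finset (Fin n)) : Prop :=
  ∃ f : (Fin d → ℝ) →ᵃ[ℝ] ℝ,
    (∀ i ∈ X, w i < f (a i)) ∧ (∀ i ∈ Y \ X, f (a i) = w i) ∧
      (∀ i ∈ J \ Y, f (a i) < w i)

/-- `w` and `w'` induce the same coherent hypersimplicial subdivision at level `k`
of the restricted configuration `a|_J`. -/
def SameHypOn {n d : ℕ} (a : Fin n → (Fin d → ℝ)) (w w' : Fin n → ℝ)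
    (J : Finset (Fin n)) (k : ℕ) : Prop :=
  ∀ X Y : Finset (Fin n), X ⊆ Y → Y ⊆ J → X.card < k → k < Y.card →
    (IsWTileOn a w J X Y ↔ IsWTileOn a w' J X Y)

/-- `w` and `w'` induce the same coherent hypersimplicial subdivision at level `k`
of the full configuration `a`. -/
def SameHyp {n d : ℕ} (a : Fin n → (Fin d → ℝ)) (w w' : Fin n → ℝ) (k : ℕ) : Prop :=
  SameHypOn a w w' Finset.univ k

open Finset

namespace HypSub

variable {n d : ℕ}


variable {n d : ℕ}

/-- The lift of the point configuration to `ℝ^d × ℝ`. -/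
def lft (a : Fin n → (Fin d → ℝ)) (i : Fin n) : (Fin d → ℝ) × ℝ := (a i, 1)

/-- Dual (linear functional) version of being a `w`-tile. -/
def DTile (a : Fin n → (Fin d → ℝ)) (w : Fin n → ℝ) (J X Y : Finset (Fin n)) : Prop :=
  ∃ φ : ((Fin d → ℝ) × ℝ) →ₗ[ℝ] ℝ,
    (∀ i ∈ X, w i < φ (lft a i)) ∧ (∀ i ∈ Y \ X, φ (lft a i) = w i) ∧
      (∀ i ∈ J \ Y, φ (lft a i) < w i)


def DT (a : Fin n → (Fin d → ℝ)) (w : Fin n → ℝ) (X Y : Finset (Fin n)) : Prop :=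
  ∃ φ : ((Fin d → ℝ) × ℝ) →ₗ[ℝ] ℝ,
    (∀ i ∈ X, w i < φ (lft a i)) ∧ (∀ i ∈ Y \ X, φ (lft a i) = w i) ∧
      (∀ i ∉ Y, φ (lft a i) < w i)

/-- From a linear functional on the lifted space to an affine map. -/
noncomputable def ofDual (φ : ((Fin d → ℝ) × ℝ) →ₗ[ℝ] ℝ) : (Fin d → ℝ) →ᵃ[ℝ] ℝ where
  toFun x := φ (x, 1)
  linear := φ.comp (LinearMap.inl ℝ (Fin d → ℝ) ℝ)
  map_vadd' p v := by
    have : ((v + p, 1) : (Fin d → ℝ) × ℝ) = (v, 0) + (p, 1) := by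
      simp [Prod.ext_iff]
    show φ (v +ᵥ p, 1) = _
    simp only [vadd_eq_add, this, map_add, LinearMap.comp_apply, LinearMap.inl_apply]

@[simp] lemma ofDual_apply (φ : ((Fin d → ℝ) × ℝ) →ₗ[ℝ] ℝ) (x : Fin d → ℝ) :
    ofDual φ x = φ (x, 1) := rfl

lemma affine_apply_eq (f : (Fin d → ℝ) →ᵃ[ℝ] ℝ) (x : Fin d → ℝ) :
    f x = f.linear x + f 0 := by
  conv_lhs => rw [congrFun (AffineMap.decomp f) x]
  rfl

theorem isWTileOn_iff_dTile (a : Fin n → (Fin d → ℝ)) (w : Fin n → ℝ)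
    (J X Y : Finset (Fin n)) : IsWTileOn a w J X Y ↔ DTile a w J X Y := by
  constructor
  · rintro ⟨f, h1, h2, h3⟩
    refine ⟨f.linear.comp (LinearMap.fst ℝ (Fin d → ℝ) ℝ) +
      (f 0) • (LinearMap.snd ℝ (Fin d → ℝ) ℝ), ?_, ?_, ?_⟩ <;>
    · intro i hi
      have := affine_apply_eq f (a i)
      simp only [lft, LinearMap.add_apply, LinearMap.comp_apply, LinearMap.fst_apply,
        LinearMap.smul_apply, LinearMap.snd_apply, smul_eq_mul, mul_one]
      first
        | exact this ▸ h1 i hi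
        | exact this ▸ h2 i hi
        | exact this ▸ h3 i hi
  · rintro ⟨φ, h1, h2, h3⟩
    exact ⟨ofDual φ, fun i hi => h1 i hi, fun i hi => h2 i hi, fun i hi => h3 i hi⟩

theorem span_lft_top (a : Fin n → (Fin d → ℝ))
    (hspan : affineSpan ℝ (Set.range a) = ⊤) :
    Submodule.span ℝ (Set.range (lft a)) = ⊤ := by
  set S := Submodule.span ℝ (Set.range (lft a)) with hSdef
  obtain ⟨x₀, i₀, hi₀⟩ : (Set.range a).Nonempty := by
    rcases Set.eq_empty_or_nonempty (Set.range a) with h | h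
    · rw [h, AffineSubspace.span_empty] at hspan
      exact absurd hspan (AffineSubspace.bot_ne_top ℝ (Fin d → ℝ) (Fin d → ℝ))
    · exact h
  have h1 : ∀ x : Fin d → ℝ, ((x, 1) : (Fin d → ℝ) × ℝ) ∈ S := by
    intro x
    have hx : x ∈ affineSpan ℝ (Set.range a) := hspan ▸ trivial
    refine affineSpan_induction (p := fun y => ((y, 1) : (Fin d → ℝ) × ℝ) ∈ S) hx ?_ ?_
    · rintro y ⟨i, rfl⟩
      exact Submodule.subset_span ⟨i, rfl⟩
    · intro c u v z hu hv hz
      have heq : ((c • (u -ᵥ v) +ᵥ z, 1) : (Fin d → ℝ) × ℝ)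
          = c • ((u, 1) - (v, 1)) + (z, 1) := by
        simp [Prod.ext_iff, vsub_eq_sub, vadd_eq_add]
      rw [heq]
      exact S.add_mem (S.smul_mem c (S.sub_mem hu hv)) hz
  have h0 : ∀ u : Fin d → ℝ, ((u, 0) : (Fin d → ℝ) × ℝ) ∈ S := by
    intro u
    have := S.sub_mem (h1 (u + a i₀)) (h1 (a i₀))
    have heq : ((u + a i₀, 1) : (Fin d → ℝ) × ℝ) - (a i₀, 1) = (u, 0) := by
      simp [Prod.ext_iff]
    rwa [heq] at this
  rw [eq_top_iff]
  rintro ⟨v, c⟩ -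
  have heq : ((v, c) : (Fin d → ℝ) × ℝ) = (v - c • a i₀, 0) + c • (a i₀, 1) := by
    simp [Prod.ext_iff]
  rw [heq]
  exact S.add_mem (h0 _) (S.smul_mem c (h1 _))




theorem pert (a : Fin n → (Fin d → ℝ)) (w : Fin n → ℝ) (X Y : Finset (Fin n))
    (g h : ((Fin d → ℝ) × ℝ) →ₗ[ℝ] ℝ)
    (hX : ∀ i ∈ X, w i < g (lft a i) ∨ (g (lft a i) = w i ∧ 0 < h (lft a i)))
    (hZ : ∀ i ∈ Y \ X, g (lft a i) = w i ∧ h (lft a i) = 0)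
    (hN : ∀ i ∉ Y, g (lft a i) < w i ∨ (g (lft a i) = w i ∧ h (lft a i) < 0)) :
    DT a w X Y := by
  have hev : ∀ᶠ ε : ℝ in nhdsWithin 0 (Set.Ioi 0),
      ∀ i : Fin n, (i ∈ X → w i < g (lft a i) + ε * h (lft a i)) ∧
        (i ∉ Y → g (lft a i) + ε * h (lft a i) < w i) := by
    rw [Filter.eventually_all]
    intro i
    have hcont : Filter.Tendsto (fun ε : ℝ => g (lft a i) + ε * h (lft a i))
        (nhdsWithin 0 (Set.Ioi 0)) (nhds (g (lft a i))) := by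
      have h2 : Filter.Tendsto (fun ε : ℝ => g (lft a i) + ε * h (lft a i))
          (nhds 0) (nhds (g (lft a i) + 0 * h (lft a i))) :=
        (Filter.Tendsto.mul Filter.tendsto_id tendsto_const_nhds).const_add _
      simpa using h2.mono_left nhdsWithin_le_nhds
    apply Filter.Eventually.and
    · by_cases hiX : i ∈ X
      · rcases hX i hiX with hlt | ⟨heq, hpos⟩
        · exact (hcont.eventually (lt_mem_nhds hlt)).mono fun ε hε _ => hε
        · refine eventually_mem_nhdsWithin.mono fun ε hε _ => ?_
          have : 0 < ε * h (lft a i) := mul_pos hε hpos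
          linarith
      · exact Filter.Eventually.of_forall fun ε hi => absurd hi hiX
    · by_cases hiY : i ∉ Y
      · rcases hN i hiY with hlt | ⟨heq, hneg⟩
        · exact (hcont.eventually (gt_mem_nhds hlt)).mono fun ε hε _ => hε
        · refine eventually_mem_nhdsWithin.mono fun ε hε _ => ?_
          have : ε * h (lft a i) < 0 := mul_neg_of_pos_of_neg hε hneg
          linarith
      · exact Filter.Eventually.of_forall fun ε hi => absurd hi hiY
  obtain ⟨ε, hε⟩ := hev.exists
  refine ⟨g + ε • h, ?_, ?_, ?_⟩
  · intro i hi
    simpa using (hε i).1 hi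
  · intro i hi
    obtain ⟨h1, h2⟩ := hZ i hi
    simp [h1, h2]
  · intro i hi
    simpa using (hε i).2 hi

theorem walk (a : Fin n → (Fin d → ℝ)) (w : Fin n → ℝ) (X Y : Finset (Fin n))
    (φ h : ((Fin d → ℝ) × ℝ) →ₗ[ℝ] ℝ)
    (hφX : ∀ i ∈ X, w i < φ (lft a i)) (hφZ : ∀ i ∈ Y \ X, φ (lft a i) = w i)
    (hφN : ∀ i ∉ Y, φ (lft a i) < w i) (hhZ : ∀ i ∈ Y \ X, h (lft a i) = 0)
    (i₀ : Fin n) (hi₀ : (i₀ ∈ X ∧ h (lft a i₀) < 0) ∨ (i₀ ∉ Y ∧ 0 < h (lft a i₀))) :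
    ∃ (ψ : ((Fin d → ℝ) × ℝ) →ₗ[ℝ] ℝ) (j : Fin n), (j ∈ X ∨ j ∉ Y) ∧ ψ (lft a j) = w j ∧
      (∀ i ∈ X, w i < ψ (lft a i) ∨ (ψ (lft a i) = w i ∧ h (lft a i) < 0)) ∧
      (∀ i ∈ Y \ X, ψ (lft a i) = w i) ∧
      (∀ i ∉ Y, ψ (lft a i) < w i ∨ (ψ (lft a i) = w i ∧ 0 < h (lft a i))) := by
  classical
  set S : Finset (Fin n) :=
    univ.filter (fun i => (i ∈ X ∧ h (lft a i) < 0) ∨ (i ∉ Y ∧ 0 < h (lft a i))) with hS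
  have hSne : S.Nonempty := ⟨i₀, by simp [hS]; exact hi₀⟩
  have hmem : ∀ i ∈ S, (i ∈ X ∧ h (lft a i) < 0) ∨ (i ∉ Y ∧ 0 < h (lft a i)) :=
    fun i hi => (mem_filter.mp hi).2
  set τ : Fin n → ℝ := fun i => (w i - φ (lft a i)) / h (lft a i) with hτ
  set t := S.inf' hSne τ with ht
  have htpos : 0 < t := by
    rw [ht, Finset.lt_inf'_iff]
    intro i hi
    rcases hmem i hi with ⟨hiX, hneg⟩ | ⟨hiY, hpos⟩
    · exact div_pos_of_neg_of_neg (by linarith [hφX i hiX]) hneg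
    · exact div_pos (by linarith [hφN i hiY]) hpos
  have hval : ∀ i ∈ S, φ (lft a i) + τ i * h (lft a i) = w i := by
    intro i hi
    have hne : h (lft a i) ≠ 0 := by
      rcases hmem i hi with ⟨_, hneg⟩ | ⟨_, hpos⟩
      exacts [ne_of_lt hneg, ne_of_gt hpos]
    rw [hτ]
    field_simp
    ring
  obtain ⟨j, hjS, hjt⟩ := Finset.exists_mem_eq_inf' hSne τ
  refine ⟨φ + t • h, j, ?_, ?_, ?_, ?_, ?_⟩
  · rcases hmem j hjS with ⟨hj, _⟩ | ⟨hj, _⟩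
    exacts [Or.inl hj, Or.inr hj]
  · have := hval j hjS
    simp only [LinearMap.add_apply, LinearMap.smul_apply, smul_eq_mul]
    rw [← ht] at hjt
    rw [hjt]
    exact this
  · intro i hi
    by_cases hneg : h (lft a i) < 0
    · have hiS : i ∈ S := by simp [hS]; exact Or.inl ⟨hi, hneg⟩
      have hle : t ≤ τ i := ht ▸ Finset.inf'_le τ hiS
      have : φ (lft a i) + t * h (lft a i) ≥ w i := by
        have h2 : t * h (lft a i) ≥ τ i * h (lft a i) :=
          mul_le_mul_of_nonpos_right hle (le_of_lt hneg)
        have := hval i hiS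
        linarith
      rcases eq_or_lt_of_le this with heq | hlt
      · exact Or.inr ⟨by simpa using heq.symm, hneg⟩
      · exact Or.inl (by simpa using hlt)
    · push_neg at hneg
      left
      have : 0 ≤ t * h (lft a i) := mul_nonneg (le_of_lt htpos) hneg
      have := hφX i hi
      simp only [LinearMap.add_apply, LinearMap.smul_apply, smul_eq_mul]
      linarith
  · intro i hi
    simp [hφZ i hi, hhZ i hi]
  · intro i hi
    by_cases hpos : 0 < h (lft a i)
    · have hiS : i ∈ S := by simp [hS]; exact Or.inr ⟨hi, hpos⟩
      have hle : t ≤ τ i := ht ▸ Finset.inf'_le τ hiS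
      have : φ (lft a i) + t * h (lft a i) ≤ w i := by
        have h2 : t * h (lft a i) ≤ τ i * h (lft a i) :=
          mul_le_mul_of_nonneg_right hle (le_of_lt hpos)
        have := hval i hiS
        linarith
      rcases eq_or_lt_of_le this with heq | hlt
      · exact Or.inr ⟨by simpa using heq, hpos⟩
      · exact Or.inl (by simpa using hlt)
    · push_neg at hpos
      left
      have : t * h (lft a i) ≤ 0 := mul_nonpos_of_nonneg_of_nonpos (le_of_lt htpos) hpos
      have := hφN i hi
      simp only [LinearMap.add_apply, LinearMap.smul_apply, smul_eq_mul]
      linarith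






set_option maxHeartbeats 1600000 in
theorem partA (a : Fin n → (Fin d → ℝ)) (hspan : affineSpan ℝ (Set.range a) = ⊤)
    (k : ℕ) (hk1 : 1 ≤ k) (hk2 : k ≤ d) (w w' : Fin n → ℝ)
    (H1 : ∀ X Y : Finset (Fin n), X ⊆ Y → X.card < k + 1 → k + 1 < Y.card →
      DT a w X Y → DT a w' X Y) :
    ∀ X Y : Finset (Fin n), X ⊆ Y → X.card < k → k < Y.card →
      DT a w X Y → DT a w' X Y := by
  classical
  suffices Hmain : ∀ p : ℕ, ∀ X Y : Finset (Fin n), X.card = p → X ⊆ Y → X.card < k →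
      k < Y.card → DT a w X Y → DT a w' X Y by
    intro X Y h1 h2 h3; exact Hmain X.card X Y rfl h1 h2 h3
  intro p
  induction p using Nat.strong_induction_on with
  | _ p IH =>
  intro X Y hcard hXY hXk hkY hw
  by_cases hY2 : k + 1 < Y.card
  · exact H1 X Y hXY (by omega) hY2 hw
  have hYcard : Y.card = k + 1 := by omega
  obtain ⟨φ, hφX, hφZ, hφN⟩ := hw
  set pp : Submodule ℝ ((Fin d → ℝ) × ℝ) := Submodule.span ℝ (lft a '' ↑(Y \ X)) with hpp
  by_cases htop : pp = ⊤
  · -- DEGENERATE CASE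
    have hfr : Module.finrank ℝ ((Fin d → ℝ) × ℝ) = d + 1 := by
      simp [Module.finrank_prod, Module.finrank_pi, Module.finrank_self]
    have hle : d + 1 ≤ (Y \ X).card := by
      have heq : pp = Submodule.span ℝ (((Y \ X).image (lft a) : Finset _) : Set _) := by
        rw [hpp]; congr 1; simp [coe_image]
      have h1 : Module.finrank ℝ pp ≤ ((Y \ X).image (lft a)).card := by
        rw [heq]; exact finrank_span_finset_le_card _
      rw [htop, finrank_top, hfr] at h1
      exact le_trans h1 (card_image_le)
    have hsd : (Y \ X).card = Y.card - X.card := card_sdiff_of_subset hXY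
    have hXzero : X.card = 0 := by omega
    have hX0 : X = ∅ := card_eq_zero.mp hXzero
    subst hX0
    have hkd : k = d := by omega
    have hYd : Y.card = d + 1 := by omega
    -- build the basis
    have hrange : Set.range (fun z : {i // i ∈ Y} => lft a ↑z) = lft a '' ↑(Y \ ∅) := by
      rw [sdiff_empty]
      ext v
      constructor
      · rintro ⟨z, rfl⟩; exact ⟨↑z, by simp, rfl⟩
      · rintro ⟨i, hi, rfl⟩; exact ⟨⟨i, by simpa using hi⟩, rfl⟩
    have hspan2 : ⊤ ≤ Submodule.span ℝ (Set.range (fun z : {i // i ∈ Y} => lft a ↑z)) := by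
      rw [hrange, ← hpp, htop]
    have hcardY : Fintype.card {i // i ∈ Y} = Module.finrank ℝ ((Fin d → ℝ) × ℝ) := by
      rw [Fintype.card_coe, hYd, hfr]
    set b : Module.Basis {i // i ∈ Y} ℝ ((Fin d → ℝ) × ℝ) :=
      basisOfTopLeSpanOfCardEqFinrank _ hspan2 hcardY with hb
    have hbe : ∀ z : {i // i ∈ Y}, b z = lft a ↑z := by
      intro z
      rw [hb, coe_basisOfTopLeSpanOfCardEqFinrank]
    set φ' := b.constr ℝ (fun z => w' ↑z) with hφ'
    have hφ'Y : ∀ z : {i // i ∈ Y}, φ' (lft a ↑z) = w' ↑z := by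
      intro z
      rw [← hbe z, hφ']
      exact b.constr_basis ℝ (fun z => w' ↑z) z
    have hmain : ∀ j, j ∉ Y → φ' (lft a j) < w' j := by
      intro j hjY
      have hsum : ∑ z : {i // i ∈ Y}, b.repr (lft a j) z = 1 := by
        have hr := b.sum_repr (lft a j)
        have h2 := congrArg (LinearMap.snd ℝ (Fin d → ℝ) ℝ) hr
        rw [map_sum] at h2
        simp only [map_smul, smul_eq_mul] at h2
        have h3 : ∀ z : {i // i ∈ Y}, (LinearMap.snd ℝ (Fin d → ℝ) ℝ) (b z) = 1 := by
          intro z; rw [hbe]; rfl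
        have h4 : (LinearMap.snd ℝ (Fin d → ℝ) ℝ) (lft a j) = 1 := rfl
        rw [h4] at h2
        rw [← h2]
        exact Finset.sum_congr rfl (fun z _ => by rw [h3 z, mul_one])
      obtain ⟨z₀, hz₀⟩ : ∃ z₀, 0 < b.repr (lft a j) z₀ := by
        by_contra hc; push_neg at hc
        have : (∑ z : {i // i ∈ Y}, b.repr (lft a j) z) ≤ 0 :=
          Finset.sum_nonpos (fun z _ => hc z)
        rw [hsum] at this; linarith
      set h : ((Fin d → ℝ) × ℝ) →ₗ[ℝ] ℝ := b.coord z₀ with hh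
      have hhz₀ : h (lft a ↑z₀) = 1 := by
        rw [hh, ← hbe]; simp [Module.Basis.coord_apply, Module.Basis.repr_self]
      have hhz : ∀ z : {i // i ∈ Y}, z ≠ z₀ → h (lft a ↑z) = 0 := by
        intro z hz
        rw [hh, ← hbe]
        simp [Module.Basis.coord_apply, Module.Basis.repr_self, Finsupp.single_apply, hz]
      have hhj : h (lft a j) = b.repr (lft a j) z₀ := by
        rw [hh]; simp [Module.Basis.coord_apply]
      -- mini-step
      obtain ⟨φ₁, hφ₁X, hφ₁Z, hφ₁N⟩ := pert a w {(z₀ : Fin n)} Y φ h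
        (by
          intro i hi
          rw [mem_singleton] at hi
          subst hi
          exact Or.inr ⟨hφZ _ (mem_sdiff.mpr ⟨z₀.2, notMem_empty _⟩), by rw [hhz₀]; norm_num⟩)
        (by
          intro i hi
          rw [mem_sdiff, mem_singleton] at hi
          refine ⟨hφZ i (mem_sdiff.mpr ⟨hi.1, notMem_empty _⟩), ?_⟩
          exact hhz ⟨i, hi.1⟩ (fun hq => hi.2 (by rw [← Subtype.coe_inj] at hq; exact hq ▸ rfl))
        )
        (fun i hi => Or.inl (hφN i hi))
      -- walk
      obtain ⟨ψ, j', hj'XY, hj'val, hsX, hsZ, hsN⟩ := walk a w {(z₀ : Fin n)} Y φ₁ h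
        hφ₁X hφ₁Z hφ₁N
        (by
          intro i hi
          rw [mem_sdiff, mem_singleton] at hi
          exact hhz ⟨i, hi.1⟩ (fun hq => hi.2 (by rw [← Subtype.coe_inj] at hq; exact hq ▸ rfl)))
        j (Or.inr ⟨hjY, by rw [hhj]; exact hz₀⟩)
      set X' := univ.filter (fun i => w i < ψ (lft a i)) with hX'
      set Y' := univ.filter (fun i => w i ≤ ψ (lft a i)) with hY'
      have hmemX' : ∀ i, i ∈ X' ↔ w i < ψ (lft a i) := by
        intro i; rw [hX', mem_filter]; simp
      have hmemY' : ∀ i, i ∈ Y' ↔ w i ≤ ψ (lft a i) := by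
        intro i; rw [hY', mem_filter]; simp
      have hX'X : X' ⊆ {(z₀ : Fin n)} := by
        intro i hi
        rw [hmemX'] at hi
        by_contra hiX
        by_cases hiY : i ∈ Y
        · have := hsZ i (mem_sdiff.mpr ⟨hiY, hiX⟩); linarith
        · rcases hsN i hiY with h2 | ⟨h2, _⟩ <;> linarith
      have hz₀X' : (z₀ : Fin n) ∈ X' := by
        rw [hmemX']
        rcases hsX _ (mem_singleton_self _) with h2 | ⟨_, h2⟩
        · exact h2
        · rw [hhz₀] at h2; norm_num at h2
      have hYY' : Y ⊆ Y' := by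
        intro i hi
        rw [hmemY']
        by_cases hiz : i ∈ ({(z₀ : Fin n)} : Finset (Fin n))
        · rw [mem_singleton] at hiz; subst hiz
          exact le_of_lt ((hmemX' _).mp hz₀X')
        · rw [hsZ i (mem_sdiff.mpr ⟨hi, hiz⟩)]
      have hX'Y' : X' ⊆ Y' := by
        intro i hi; rw [hmemY']; exact le_of_lt ((hmemX' i).mp hi)
      have hj'Y : j' ∉ Y := by
        rcases hj'XY with hj' | hj'
        · rw [mem_singleton] at hj'; subst hj'
          rw [hmemX'] at hz₀X'; linarith [hj'val]
        · exact hj'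
      have htile : DT a w X' Y' := by
        refine ⟨ψ, ?_, ?_, ?_⟩
        · intro i hi; exact (hmemX' i).mp hi
        · intro i hi
          rw [mem_sdiff, hmemY' i, hmemX' i] at hi
          push_neg at hi
          linarith [hi.1, hi.2]
        · intro i hi
          rw [hmemY'] at hi; push_neg at hi; exact hi
      have hw' : DT a w' X' Y' := by
        apply H1 X' Y' hX'Y'
        · have : X'.card ≤ 1 := le_trans (card_le_card hX'X) (by simp)
          omega
        · have hins : insert j' Y ⊆ Y' := by
            refine insert_subset ?_ hYY'
            rw [hmemY']
            exact le_of_eq hj'val.symm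
          have := card_le_card hins
          rw [card_insert_of_notMem hj'Y] at this
          omega
        · exact htile
      obtain ⟨ψ', hw'X, hw'Z, hw'N⟩ := hw'
      set T := ψ' (lft a ↑z₀) - w' ↑z₀ with hT
      have hTpos : 0 < T := by
        rw [hT]; have := hw'X _ hz₀X'; linarith
      have hZ'X' : ∀ z : {i // i ∈ Y}, z ≠ z₀ → ψ' (lft a ↑z) = w' ↑z := by
        intro z hz
        apply hw'Z
        rw [mem_sdiff]
        constructor
        · exact hYY' z.2
        · intro hc
          have := hX'X hc
          rw [mem_singleton] at this
          exact hz (Subtype.coe_injective this)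
      have hφ'eq : φ' = ψ' - T • h := by
        rw [hφ']
        apply b.ext
        intro z
        rw [hbe z]
        by_cases hz : z = z₀
        · subst hz
          have : (b.constr ℝ (fun z => w' ↑z)) (lft a ↑z) = w' ↑z := by
            rw [← hbe]; exact b.constr_basis ℝ _ z
          rw [this]
          simp only [LinearMap.sub_apply, LinearMap.smul_apply, smul_eq_mul]
          rw [hhz₀, hT]; ring
        · have : (b.constr ℝ (fun z => w' ↑z)) (lft a ↑z) = w' ↑z := by
            rw [← hbe]; exact b.constr_basis ℝ _ z
          rw [this]
          simp only [LinearMap.sub_apply, LinearMap.smul_apply, smul_eq_mul]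
          rw [hhz z hz, hZ'X' z hz]; ring
      rw [hφ'eq]
      simp only [LinearMap.sub_apply, LinearMap.smul_apply, smul_eq_mul]
      rw [hhj]
      by_cases hjY' : j ∈ Y'
      · have hjX' : j ∉ X' := by
          intro hc
          have := hX'X hc
          rw [mem_singleton] at this
          subst this
          exact hjY z₀.2
        have : ψ' (lft a j) = w' j := hw'Z j (mem_sdiff.mpr ⟨hjY', hjX'⟩)
        rw [this]
        nlinarith
      · have : ψ' (lft a j) < w' j := hw'N j hjY'
        nlinarith
    refine ⟨φ', ?_, ?_, ?_⟩
    · intro i hi; exact absurd hi (notMem_empty i)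
    · intro i hi
      rw [mem_sdiff] at hi
      exact hφ'Y ⟨i, hi.1⟩
    · exact hmain
  · -- NONDEGENERATE CASE
    have hex : ∃ i₀, lft a i₀ ∉ pp := by
      by_contra hc
      push_neg at hc
      have hle : Submodule.span ℝ (Set.range (lft a)) ≤ pp :=
        Submodule.span_le.mpr (by rintro _ ⟨i, rfl⟩; exact hc i)
      rw [span_lft_top a hspan] at hle
      exact htop (top_le_iff.mp hle)
    obtain ⟨i₀, hi₀⟩ := hex
    have hq : Submodule.mkQ pp (lft a i₀) ≠ 0 := by
      simpa [Submodule.Quotient.mk_eq_zero] using hi₀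
    obtain ⟨ψ₀, hψ₀⟩ : ∃ ψ₀ : Module.Dual ℝ (((Fin d → ℝ) × ℝ) ⧸ pp),
        ψ₀ (Submodule.mkQ pp (lft a i₀)) ≠ 0 := by
      by_contra hc; push_neg at hc
      exact hq ((Module.forall_dual_apply_eq_zero_iff ℝ _).mp hc)
    set h1 : ((Fin d → ℝ) × ℝ) →ₗ[ℝ] ℝ := ψ₀.comp (Submodule.mkQ pp) with hh1
    have hh1i₀ : h1 (lft a i₀) ≠ 0 := hψ₀
    have hh1Z : ∀ i ∈ Y \ X, h1 (lft a i) = 0 := by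
      intro i hi
      have hmem : lft a i ∈ pp := Submodule.subset_span ⟨i, by simpa using hi, rfl⟩
      have : Submodule.mkQ pp (lft a i) = 0 := (Submodule.Quotient.mk_eq_zero pp).mpr hmem
      rw [hh1, LinearMap.comp_apply, this, map_zero]
    have hi₀XY : i₀ ∈ X ∨ i₀ ∉ Y := by
      by_contra hc
      push_neg at hc
      exact hi₀ (Submodule.subset_span ⟨i₀, by simp [hc.1, hc.2], rfl⟩)
    obtain ⟨h, hhZ, hdir⟩ : ∃ h : ((Fin d → ℝ) × ℝ) →ₗ[ℝ] ℝ,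
        (∀ i ∈ Y \ X, h (lft a i) = 0) ∧
        ((i₀ ∈ X ∧ h (lft a i₀) < 0) ∨ (i₀ ∉ Y ∧ 0 < h (lft a i₀))) := by
      rcases hi₀XY with hX0 | hY0
      · rcases lt_or_gt_of_ne hh1i₀ with hv | hv
        · exact ⟨h1, hh1Z, Or.inl ⟨hX0, hv⟩⟩
        · exact ⟨-h1, fun i hi => by simp [hh1Z i hi], Or.inl ⟨hX0, by simpa using hv⟩⟩
      · rcases lt_or_gt_of_ne hh1i₀ with hv | hv
        · exact ⟨-h1, fun i hi => by simp [hh1Z i hi], Or.inr ⟨hY0, by simpa using hv⟩⟩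
        · exact ⟨h1, hh1Z, Or.inr ⟨hY0, hv⟩⟩
    obtain ⟨ψ, j, hjXY, hjval, hsX, hsZ, hsN⟩ := walk a w X Y φ h hφX hφZ hφN hhZ i₀ hdir
    set X' := univ.filter (fun i => w i < ψ (lft a i)) with hX'
    set Y' := univ.filter (fun i => w i ≤ ψ (lft a i)) with hY'
    have hmemX' : ∀ i, i ∈ X' ↔ w i < ψ (lft a i) := by
      intro i; rw [hX', mem_filter]; simp
    have hmemY' : ∀ i, i ∈ Y' ↔ w i ≤ ψ (lft a i) := by
      intro i; rw [hY', mem_filter]; simp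
    have hX'X : X' ⊆ X := by
      intro i hi
      rw [hmemX'] at hi
      by_contra hiX
      by_cases hiY : i ∈ Y
      · have := hsZ i (mem_sdiff.mpr ⟨hiY, hiX⟩); linarith
      · rcases hsN i hiY with h2 | ⟨h2, _⟩ <;> linarith
    have hYY' : Y ⊆ Y' := by
      intro i hi
      rw [hmemY']
      by_cases hiX : i ∈ X
      · rcases hsX i hiX with h2 | ⟨h2, _⟩ <;> linarith
      · rw [hsZ i (mem_sdiff.mpr ⟨hi, hiX⟩)]
    have hX'Y' : X' ⊆ Y' := by
      intro i hi; rw [hmemY']; exact le_of_lt ((hmemX' i).mp hi)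
    have hjX' : j ∉ X' := by
      rw [hmemX', hjval]; exact lt_irrefl _
    have htile : DT a w X' Y' := by
      refine ⟨ψ, ?_, ?_, ?_⟩
      · intro i hi; exact (hmemX' i).mp hi
      · intro i hi
        rw [mem_sdiff, hmemY' i, hmemX' i] at hi
        push_neg at hi
        linarith [hi.1, hi.2]
      · intro i hi
        rw [hmemY'] at hi; push_neg at hi; exact hi
    have hw' : DT a w' X' Y' := by
      rcases hjXY with hjX | hjY
      · have hlt : X'.card < X.card :=
          card_lt_card ((Finset.ssubset_iff_of_subset hX'X).mpr ⟨j, hjX, hjX'⟩)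
        exact IH X'.card (by omega) X' Y' rfl hX'Y' (by omega)
          (lt_of_lt_of_le hkY (card_le_card hYY')) htile
      · have hins : insert j Y ⊆ Y' := by
          refine insert_subset ?_ hYY'
          rw [hmemY']
          exact le_of_eq hjval.symm
        have hcardY' := card_le_card hins
        rw [card_insert_of_notMem hjY] at hcardY'
        refine H1 X' Y' hX'Y' ?_ (by omega) htile
        have := card_le_card hX'X
        omega
    obtain ⟨ψ', hw'X, hw'Z, hw'N⟩ := hw'
    apply pert a w' X Y ψ' (-h)
    · intro i hi
      by_cases hiX' : i ∈ X'
      · exact Or.inl (hw'X i hiX')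
      · rcases hsX i hi with h2 | ⟨h2, h3⟩
        · exact absurd ((hmemX' i).mpr h2) hiX'
        · refine Or.inr ⟨hw'Z i (mem_sdiff.mpr ⟨?_, hiX'⟩), by simpa using h3⟩
          rw [hmemY', h2]
    · intro i hi
      have hiY' : i ∈ Y' \ X' := by
        rw [mem_sdiff] at hi ⊢
        exact ⟨hYY' hi.1, fun hc => hi.2 (hX'X hc)⟩
      refine ⟨hw'Z i hiY', by simpa using hhZ i hi⟩
    · intro i hi
      by_cases hiY' : i ∈ Y'
      · have hiX' : i ∉ X' := fun hc => hi (hXY (hX'X hc))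
        rcases hsN i hi with h2 | ⟨h2, h3⟩
        · rw [hmemY'] at hiY'; linarith
        · exact Or.inr ⟨hw'Z i (mem_sdiff.mpr ⟨hiY', hiX'⟩), by simpa using h3⟩
      · exact Or.inl (hw'N i hiY')




/-- deletion tile, dual normalized form -/
def DTd (a : Fin n → (Fin d → ℝ)) (w : Fin n → ℝ) (x : Fin n) (X Y : Finset (Fin n)) : Prop :=
  ∃ φ : ((Fin d → ℝ) × ℝ) →ₗ[ℝ] ℝ,
    (∀ i ∈ X, w i < φ (lft a i)) ∧ (∀ i ∈ Y \ X, φ (lft a i) = w i) ∧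
      (∀ i, i ≠ x → i ∉ Y → φ (lft a i) < w i)

theorem partC (a : Fin n → (Fin d → ℝ)) (k : ℕ) (hk1 : 1 ≤ k) (w w' : Fin n → ℝ)
    (Ek : ∀ X Y : Finset (Fin n), X ⊆ Y → X.card < k → k < Y.card →
      (DT a w X Y ↔ DT a w' X Y))
    (Edel : ∀ (x : Fin n) (X Y : Finset (Fin n)), X ⊆ Y → Y ⊆ {x}ᶜ → X.card < k →
      k < Y.card → (DTd a w x X Y ↔ DTd a w' x X Y)) :
    ∀ X Y : Finset (Fin n), X ⊆ Y → X.card < k + 1 → k + 1 < Y.card →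
      DT a w X Y → DT a w' X Y := by
  classical
  intro X Y hXY hXk1 hk1Y hw
  by_cases hXk : X.card < k
  · exact (Ek X Y hXY hXk (by omega)).mp hw
  have hXk' : X.card = k := by omega
  obtain ⟨x, hx⟩ : ∃ x, x ∈ X := (Finset.card_pos.mp (by omega))
  obtain ⟨φ, hφX, hφZ, hφN⟩ := hw
  set X' := X.erase x with hX'
  set Y' := Y.erase x with hY'
  have hxY : x ∈ Y := hXY hx
  have hX'X : X' ⊆ X := erase_subset _ _
  have hX'Y' : X' ⊆ Y' := by
    intro i hi
    rw [hX', mem_erase] at hi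
    rw [hY', mem_erase]
    exact ⟨hi.1, hXY hi.2⟩
  have hY'c : Y' ⊆ {x}ᶜ := by
    intro i hi
    rw [hY', mem_erase] at hi
    rw [mem_compl, mem_singleton]
    exact hi.1
  have hX'card : X'.card = k - 1 := by rw [hX', card_erase_of_mem hx, hXk']
  have hY'card : Y'.card = Y.card - 1 := by rw [hY', card_erase_of_mem hxY]
  have hZsub : Y \ X ⊆ Y' \ X' := by
    intro i hi
    rw [mem_sdiff] at hi
    have hix : i ≠ x := fun hq => hi.2 (hq ▸ hx)
    rw [mem_sdiff, hY', hX', mem_erase, mem_erase]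
    exact ⟨⟨hix, hi.1⟩, fun hc => hi.2 hc.2⟩
  have hZsub' : Y' \ X' ⊆ Y \ X := by
    intro i hi
    rw [mem_sdiff, hY', hX', mem_erase, mem_erase] at hi
    push_neg at hi
    exact mem_sdiff.mpr ⟨hi.1.2, fun hc => by
      have := hi.2 hi.1.1
      exact this hc⟩
  have hdelw : DTd a w x X' Y' := by
    refine ⟨φ, fun i hi => hφX i (hX'X hi), fun i hi => hφZ i (hZsub' hi), ?_⟩
    intro i hix hiY'
    refine hφN i (fun hc => hiY' ?_)
    rw [hY', mem_erase]; exact ⟨hix, hc⟩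
  have hdelw' : DTd a w' x X' Y' :=
    (Edel x X' Y' hX'Y' hY'c (by omega) (by omega)).mp hdelw
  obtain ⟨ψ, hψX, hψZ, hψN⟩ := hdelw'
  have hxZ' : x ∈ Y' \ X' → False := by
    intro hc; rw [mem_sdiff, hY', mem_erase] at hc; exact hc.1.1 rfl
  rcases lt_trichotomy (ψ (lft a x)) (w' x) with hlt | heq | hgt
  · -- σ < : get (X',Y') as w'-full tile, transfer back, build middle tile for w
    have hv' : DT a w' X' Y' := by
      refine ⟨ψ, hψX, hψZ, ?_⟩
      intro i hi
      by_cases hix : i = x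
      · subst hix; exact hlt
      · exact hψN i hix hi
    have hv : DT a w X' Y' :=
      (Ek X' Y' hX'Y' (by omega) (by omega)).mpr hv'
    obtain ⟨φ₁, hφ₁X, hφ₁Z, hφ₁N⟩ := hv
    have hφ₁x : φ₁ (lft a x) < w x := hφ₁N x (by rw [hY', mem_erase]; tauto)
    have hφx : w x < φ (lft a x) := hφX x hx
    set A := φ (lft a x) - w x with hA
    set B := w x - φ₁ (lft a x) with hB
    have hApos : 0 < A := by rw [hA]; linarith
    have hBpos : 0 < B := by rw [hB]; linarith
    set t₀ := A / (A + B) with ht₀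
    have ht₀pos : 0 < t₀ := div_pos hApos (by linarith)
    have ht₀lt : t₀ < 1 := by
      rw [ht₀, div_lt_one (by linarith)]; linarith
    set φ₂ := (1 - t₀) • φ + t₀ • φ₁ with hφ₂
    have hφ₂app : ∀ v, φ₂ v = (1 - t₀) * φ v + t₀ * φ₁ v := by
      intro v; rw [hφ₂]; simp
    have hφ₂x : φ₂ (lft a x) = w x := by
      rw [hφ₂app, ht₀]
      have hAB : φ (lft a x) - φ₁ (lft a x) = A + B := by rw [hA, hB]; ring
      field_simp
      nlinarith [hAB]
    have hu : DT a w X' Y := by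
      refine ⟨φ₂, ?_, ?_, ?_⟩
      · intro i hi
        have h1 := hφX i (hX'X hi)
        have h2 := hφ₁X i hi
        rw [hφ₂app]
        nlinarith
      · intro i hi
        rw [mem_sdiff] at hi
        by_cases hix : i = x
        · subst hix; exact hφ₂x
        · have hiZ : i ∈ Y \ X := by
            rw [mem_sdiff]
            refine ⟨hi.1, fun hc => hi.2 ?_⟩
            rw [hX', mem_erase]; exact ⟨hix, hc⟩
          have h1 := hφZ i hiZ
          have h2 := hφ₁Z i (hZsub hiZ)
          rw [hφ₂app, h1, h2]; ring
      · intro i hi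
        have h1 := hφN i hi
        have h2 := hφ₁N i (fun hc => hi (by
          rw [hY', mem_erase] at hc; exact hc.2))
        rw [hφ₂app]
        nlinarith
    have hu' : DT a w' X' Y :=
      (Ek X' Y (hX'X.trans hXY) (by omega) (by omega)).mp hu
    obtain ⟨ψ₀, hψ₀X, hψ₀Z, hψ₀N⟩ := hu'
    set h := φ - φ₂ with hh
    have hhapp : ∀ v, h v = φ v - φ₂ v := by intro v; rw [hh]; simp
    have hhZ : ∀ i ∈ Y \ X, h (lft a i) = 0 := by
      intro i hi
      rw [hhapp, hφZ i hi]
      have hiZ' : i ∈ Y \ X' := by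
        rw [mem_sdiff] at hi ⊢
        exact ⟨hi.1, fun hc => hi.2 (hX'X hc)⟩
      have h2 : φ₂ (lft a i) = w i := by
        rw [mem_sdiff] at hiZ'
        by_cases hix : i = x
        · exact absurd (hix ▸ hx) (mem_sdiff.mp hi).2
        · have hiZ : i ∈ Y \ X := hi
          have := hφ₁Z i (hZsub hiZ)
          rw [hφ₂app, hφZ i hiZ, this]; ring
      rw [h2]; ring
    have hhx : 0 < h (lft a x) := by
      rw [hhapp, hφ₂x]; linarith
    apply pert a w' X Y ψ₀ h
    · intro i hi
      by_cases hix : i = x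
      · subst hix
        refine Or.inr ⟨?_, hhx⟩
        apply hψ₀Z
        rw [mem_sdiff, hX', mem_erase]
        exact ⟨hxY, fun hc => hc.1 rfl⟩
      · refine Or.inl (hψ₀X i ?_)
        rw [hX', mem_erase]; exact ⟨hix, hi⟩
    · intro i hi
      refine ⟨?_, hhZ i hi⟩
      apply hψ₀Z
      rw [mem_sdiff] at hi ⊢
      exact ⟨hi.1, fun hc => hi.2 (hX'X hc)⟩
    · intro i hi
      exact Or.inl (hψ₀N i hi)
  · -- σ = : (X', Y) is w'-tile, transfer to w, perturb
    have hu' : DT a w' X' Y := by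
      refine ⟨ψ, hψX, ?_, ?_⟩
      · intro i hi
        rw [mem_sdiff] at hi
        by_cases hix : i = x
        · subst hix; exact heq
        · refine hψZ i ?_
          rw [mem_sdiff, hY', mem_erase]
          exact ⟨⟨hix, hi.1⟩, hi.2⟩
      · intro i hi
        have hix : i ≠ x := fun hq => hi (hq ▸ hxY)
        exact hψN i hix (fun hc => hi (by rw [hY', mem_erase] at hc; exact hc.2))
    have hu : DT a w X' Y :=
      (Ek X' Y (hX'X.trans hXY) (by omega) (by omega)).mpr hu'
    obtain ⟨φ₀, hφ₀X, hφ₀Z, hφ₀N⟩ := hu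
    set h := φ - φ₀ with hh
    have hhapp : ∀ v, h v = φ v - φ₀ v := by intro v; rw [hh]; simp
    have hφ₀x : φ₀ (lft a x) = w x := by
      apply hφ₀Z
      rw [mem_sdiff, hX', mem_erase]
      exact ⟨hxY, fun hc => hc.1 rfl⟩
    have hhx : 0 < h (lft a x) := by
      rw [hhapp, hφ₀x]
      linarith [hφX x hx]
    have hhZ : ∀ i ∈ Y \ X, h (lft a i) = 0 := by
      intro i hi
      have h2 : φ₀ (lft a i) = w i := by
        apply hφ₀Z
        rw [mem_sdiff] at hi ⊢
        exact ⟨hi.1, fun hc => hi.2 (hX'X hc)⟩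
      rw [hhapp, hφZ i hi, h2]; ring
    apply pert a w' X Y ψ h
    · intro i hi
      by_cases hix : i = x
      · subst hix; exact Or.inr ⟨heq, hhx⟩
      · refine Or.inl (hψX i ?_)
        rw [hX', mem_erase]; exact ⟨hix, hi⟩
    · intro i hi
      refine ⟨hψZ i (hZsub hi), hhZ i hi⟩
    · intro i hi
      have hix : i ≠ x := fun hq => hi (hq ▸ hxY)
      exact Or.inl (hψN i hix (fun hc => hi (by rw [hY', mem_erase] at hc; exact hc.2)))
  · -- σ > : ψ itself works
    refine ⟨ψ, ?_, ?_, ?_⟩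
    · intro i hi
      by_cases hix : i = x
      · subst hix; exact hgt
      · exact hψX i (by rw [hX', mem_erase]; exact ⟨hix, hi⟩)
    · intro i hi
      exact hψZ i (hZsub hi)
    · intro i hi
      have hix : i ≠ x := fun hq => hi (hq ▸ hxY)
      exact hψN i hix (fun hc => hi (by rw [hY', mem_erase] at hc; exact hc.2))


theorem del_decomp (a : Fin n → (Fin d → ℝ)) (w : Fin n → ℝ) (x : Fin n)
    (X Y : Finset (Fin n)) (hxY : x ∉ Y) :
    DTd a w x X Y ↔
      (DT a w X Y ∨ DT a w X (insert x Y) ∨ DT a w (insert x X) (insert x Y)) := by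
  constructor
  · rintro ⟨φ, h1, h2, h3⟩
    rcases lt_trichotomy (φ (lft a x)) (w x) with hlt | heq | hgt
    · left
      refine ⟨φ, h1, h2, ?_⟩
      intro i hi
      by_cases hix : i = x
      · subst hix; exact hlt
      · exact h3 i hix hi
    · right; left
      refine ⟨φ, h1, ?_, ?_⟩
      · intro i hi
        rw [mem_sdiff, mem_insert] at hi
        rcases hi.1 with hix | hiY
        · subst hix; exact heq
        · exact h2 i (mem_sdiff.mpr ⟨hiY, hi.2⟩)
      · intro i hi
        rw [mem_insert] at hi
        push_neg at hi
        exact h3 i hi.1 hi.2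
    · right; right
      refine ⟨φ, ?_, ?_, ?_⟩
      · intro i hi
        rw [mem_insert] at hi
        rcases hi with hix | hiX
        · subst hix; exact hgt
        · exact h1 i hiX
      · intro i hi
        rw [mem_sdiff, mem_insert, mem_insert] at hi
        push_neg at hi
        rcases hi.1 with hix | hiY
        · exact absurd hix hi.2.1
        · exact h2 i (mem_sdiff.mpr ⟨hiY, hi.2.2⟩)
      · intro i hi
        rw [mem_insert] at hi; push_neg at hi
        exact h3 i hi.1 hi.2
  · rintro (⟨φ, h1, h2, h3⟩ | ⟨φ, h1, h2, h3⟩ | ⟨φ, h1, h2, h3⟩)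
    · exact ⟨φ, h1, h2, fun i hix hi => h3 i hi⟩
    · refine ⟨φ, h1, ?_, ?_⟩
      · intro i hi
        rw [mem_sdiff] at hi
        exact h2 i (mem_sdiff.mpr ⟨mem_insert.mpr (Or.inr hi.1), hi.2⟩)
      · intro i hix hi
        exact h3 i (by rw [mem_insert]; push_neg; exact ⟨hix, hi⟩)
    · refine ⟨φ, ?_, ?_, ?_⟩
      · intro i hi
        exact h1 i (mem_insert.mpr (Or.inr hi))
      · intro i hi
        rw [mem_sdiff] at hi
        have hix : i ≠ x := fun hq => hxY (hq ▸ hi.1)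
        refine h2 i (mem_sdiff.mpr ⟨mem_insert.mpr (Or.inr hi.1), ?_⟩)
        rw [mem_insert]; push_neg; exact ⟨hix, hi.2⟩
      · intro i hix hi
        exact h3 i (by rw [mem_insert]; push_neg; exact ⟨hix, hi⟩)

theorem dt_iff (a : Fin n → (Fin d → ℝ)) (w : Fin n → ℝ) (X Y : Finset (Fin n)) :
    IsWTileOn a w univ X Y ↔ DT a w X Y := by
  rw [isWTileOn_iff_dTile]
  unfold DTile DT
  refine exists_congr fun φ => and_congr_right fun _ => and_congr_right fun _ => ?_
  constructor
  · intro H i hi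
    exact H i (mem_sdiff.mpr ⟨mem_univ _, hi⟩)
  · intro H i hi
    exact H i (mem_sdiff.mp hi).2

theorem dtd_iff (a : Fin n → (Fin d → ℝ)) (w : Fin n → ℝ) (x : Fin n)
    (X Y : Finset (Fin n)) : IsWTileOn a w {x}ᶜ X Y ↔ DTd a w x X Y := by
  rw [isWTileOn_iff_dTile]
  unfold DTile DTd
  refine exists_congr fun φ => and_congr_right fun _ => and_congr_right fun _ => ?_
  constructor
  · intro H i hix hi
    refine H i (mem_sdiff.mpr ⟨?_, hi⟩)
    rw [mem_compl, mem_singleton]; exact hix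
  · intro H i hi
    rw [mem_sdiff, mem_compl, mem_singleton] at hi
    exact H i hi.1 hi.2

end HypSub

open HypSub Finset in
theorem hypersecondary_eq_sum_with_deletions {n d : ℕ} (a : Fin n → (Fin d → ℝ))
    (hspan : affineSpan ℝ (Set.range a) = ⊤)
    (k : ℕ) (hk1 : 1 ≤ k) (hk2 : k ≤ d)
    (w w' : Fin n → ℝ) :
    SameHyp a w w' (k + 1) ↔
      (SameHyp a w w' k ∧ ∀ x : Fin n, SameHypOn a w w' {x}ᶜ k) := by
  classical
  constructor
  · intro H
    have H1 : ∀ X Y : Finset (Fin n), X ⊆ Y → X.card < k + 1 → k + 1 < Y.card →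
        DT a w X Y → DT a w' X Y := fun X Y h1 h2 h3 ht =>
      (dt_iff a w' X Y).mp
        ((H X Y h1 (subset_univ _) h2 h3).mp ((dt_iff a w X Y).mpr ht))
    have H1' : ∀ X Y : Finset (Fin n), X ⊆ Y → X.card < k + 1 → k + 1 < Y.card →
        DT a w' X Y → DT a w X Y := fun X Y h1 h2 h3 ht =>
      (dt_iff a w X Y).mp
        ((H X Y h1 (subset_univ _) h2 h3).mpr ((dt_iff a w' X Y).mpr ht))
    have Ek : ∀ X Y : Finset (Fin n), X ⊆ Y → X.card < k → k < Y.card →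
        (DT a w X Y ↔ DT a w' X Y) := fun X Y h1 h2 h3 =>
      ⟨partA a hspan k hk1 hk2 w w' H1 X Y h1 h2 h3,
        partA a hspan k hk1 hk2 w' w H1' X Y h1 h2 h3⟩
    refine ⟨?_, ?_⟩
    · intro X Y h1 _ h2 h3
      rw [dt_iff, dt_iff]
      exact Ek X Y h1 h2 h3
    · intro x X Y h1 h2 h3 h4
      have hxY : x ∉ Y := fun hc => by
        have := h2 hc
        rw [mem_compl, mem_singleton] at this
        exact this rfl
      have hxX : x ∉ X := fun hc => hxY (h1 hc)
      rw [dtd_iff, dtd_iff, del_decomp a w x X Y hxY, del_decomp a w' x X Y hxY]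
      have e1 := Ek X Y h1 h3 h4
      have e2 : DT a w X (insert x Y) ↔ DT a w' X (insert x Y) := by
        refine Ek X (insert x Y) (h1.trans (subset_insert _ _)) h3 ?_
        rw [card_insert_of_notMem hxY]; omega
      have e3 : DT a w (insert x X) (insert x Y) ↔ DT a w' (insert x X) (insert x Y) := by
        have hsub : insert x X ⊆ insert x Y := insert_subset_insert _ h1
        have hc1 : (insert x X).card < k + 1 := by
          rw [card_insert_of_notMem hxX]; omega
        have hc2 : k + 1 < (insert x Y).card := by
          rw [card_insert_of_notMem hxY]; omega
        exact ⟨H1 _ _ hsub hc1 hc2, H1' _ _ hsub hc1 hc2⟩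
      rw [e1, e2, e3]
  · rintro ⟨Ek, Edel⟩
    have EkD : ∀ X Y : Finset (Fin n), X ⊆ Y → X.card < k → k < Y.card →
        (DT a w X Y ↔ DT a w' X Y) := fun X Y h1 h2 h3 => by
      rw [← dt_iff, ← dt_iff]
      exact Ek X Y h1 (subset_univ _) h2 h3
    have EkD' : ∀ X Y : Finset (Fin n), X ⊆ Y → X.card < k → k < Y.card →
        (DT a w' X Y ↔ DT a w X Y) := fun X Y h1 h2 h3 => (EkD X Y h1 h2 h3).symm
    have EdelD : ∀ (x : Fin n) (X Y : Finset (Fin n)), X ⊆ Y → Y ⊆ {x}ᶜ →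
        X.card < k → k < Y.card → (DTd a w x X Y ↔ DTd a w' x X Y) :=
      fun x X Y h1 h2 h3 h4 => by
        rw [← dtd_iff, ← dtd_iff]
        exact Edel x X Y h1 h2 h3 h4
    have EdelD' : ∀ (x : Fin n) (X Y : Finset (Fin n)), X ⊆ Y → Y ⊆ {x}ᶜ →
        X.card < k → k < Y.card → (DTd a w' x X Y ↔ DTd a w x X Y) :=
      fun x X Y h1 h2 h3 h4 => (EdelD x X Y h1 h2 h3 h4).symm
    intro X Y h1 _ h2 h3
    rw [dt_iff, dt_iff]
    exact ⟨partC a k hk1 w w' EkD EdelD X Y h1 h2 h3,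
      partC a k hk1 w' w EkD' EdelD' X Y h1 h2 h3⟩
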